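/- Let Y be a finite nonempty type, let u : Y → ℝ, let p and q be full-support probability vectors on Y, and let a > 0 and b > 0. Define σ(y) = exp((u(y) + a·log p(y) + b·log q(y))/(a+b)) / ∑_{y'} exp((u(y') + a·log p(y') + b·log q(y'))/(a+b)). Then σ is a full-support probability vector on Y, and σ is the unique maximizer over probability vectors π on Y of the doubly KL-regularized linear objective ∑_y π(y)·u(y) − a·KL(π‖p) − b·KL(π‖q); that is, for every probability vector π the objective at π is at most its value at σ, with equality if and only if π = σ. -/
import Mathlib

open Finset Real

noncomputable def KL {Y : Type*} [Fintype Y] (p q : Y → ℝ) : ℝ :=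
  ∑ y, p y * Real.log (p y / q y)

lemma gibbs_term (x t : ℝ) (hx : 0 ≤ x) (ht : 0 < t) :
    x - t ≤ x * Real.log (x / t) ∧ (x * Real.log (x / t) = x - t ↔ x = t) := by
  rcases eq_or_lt_of_le hx with h | h
  · refine ⟨by simp [← h]; linarith, ?_⟩
    simp [← h]
    constructor
    · intro h'; linarith
    · intro h'; linarith
  · have hxt : 0 < t / x := div_pos ht h
    have hlog : Real.log (t / x) ≤ t / x - 1 := Real.log_le_sub_one_of_pos hxt
    have hrev : Real.log (x / t) = - Real.log (t / x) := by
      rw [← Real.log_inv, inv_div]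
    constructor
    · have : x * Real.log (t / x) ≤ x * (t / x - 1) :=
        mul_le_mul_of_nonneg_left hlog h.le
      rw [hrev]
      have hx' : x * (t / x) = t := by field_simp
      nlinarith
    · constructor
      · intro heq
        by_contra hne
        have hne' : t / x ≠ 1 := by
          intro h1
          apply hne
          field_simp at h1
          linarith
        have hstrict : Real.log (t / x) < t / x - 1 :=
          Real.log_lt_sub_one_of_pos hxt hne'
        have : x * Real.log (t / x) < x * (t / x - 1) :=
          mul_lt_mul_of_pos_left hstrict h
        rw [hrev] at heq
        have hx' : x * (t / x) = t := by field_simp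
        nlinarith
      · intro heq; subst heq
        rw [div_self h.ne', Real.log_one, mul_zero]; ring

lemma KL_nonneg' {Y : Type*} [Fintype Y] (ρ σ : Y → ℝ)
    (hρ : ∀ y, 0 ≤ ρ y) (hρs : ∑ y, ρ y = 1)
    (hσ : ∀ y, 0 < σ y) (hσs : ∑ y, σ y = 1) :
    0 ≤ KL ρ σ ∧ (KL ρ σ = 0 ↔ ρ = σ) := by
  have hterm : ∀ y, ρ y - σ y ≤ ρ y * Real.log (ρ y / σ y) :=
    fun y => (gibbs_term _ _ (hρ y) (hσ y)).1
  have hsum : ∑ y, (ρ y - σ y) ≤ KL ρ σ := by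
    unfold KL; exact Finset.sum_le_sum fun y _ => hterm y
  have h0 : (∑ y, (ρ y - σ y)) = 0 := by rw [Finset.sum_sub_distrib, hρs, hσs]; ring
  rw [h0] at hsum
  refine ⟨hsum, ?_, ?_⟩
  · intro hKL
    funext y
    have := (Finset.sum_eq_sum_iff_of_le (fun y (_ : y ∈ Finset.univ) => hterm y)).mp (by
      unfold KL at hKL; rw [hKL, h0]) y (Finset.mem_univ y)
    exact (gibbs_term _ _ (hρ y) (hσ y)).2.mp this.symm
  · intro h; subst h
    unfold KL
    apply Finset.sum_eq_zero
    intro y _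
    rw [div_self (hσ y).ne', Real.log_one, mul_zero]

theorem doubly_regularized_unique_maximizer
    {Y : Type*} [Fintype Y] [Nonempty Y]
    (u : Y → ℝ) (p q : Y → ℝ)
    (hp_pos : ∀ y, 0 < p y) (hp_sum : ∑ y, p y = 1)
    (hq_pos : ∀ y, 0 < q y) (hq_sum : ∑ y, q y = 1)
    (a b : ℝ) (ha : 0 < a) (hb : 0 < b)
    (σ : Y → ℝ)
    (hσ : ∀ y, σ y =
      Real.exp ((u y + a * Real.log (p y) + b * Real.log (q y)) / (a + b)) /
        ∑ y', Real.exp ((u y' + a * Real.log (p y') + b * Real.log (q y')) / (a + b))) :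
    ((∀ y, 0 < σ y) ∧ ∑ y, σ y = 1) ∧
    (∀ ρ : Y → ℝ, (∀ y, 0 ≤ ρ y) → ∑ y, ρ y = 1 →
      (((∑ y, ρ y * u y) - a * KL ρ p - b * KL ρ q ≤
          (∑ y, σ y * u y) - a * KL σ p - b * KL σ q) ∧
       (((∑ y, ρ y * u y) - a * KL ρ p - b * KL ρ q =
          (∑ y, σ y * u y) - a * KL σ p - b * KL σ q) ↔ ρ = σ))) := by
  have hab : (0:ℝ) < a + b := by linarith
  set E : Y → ℝ := fun y => u y + a * Real.log (p y) + b * Real.log (q y) with hE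
  set Z : ℝ := ∑ y', Real.exp (E y' / (a + b)) with hZ
  have hZpos : 0 < Z := Finset.sum_pos (fun y _ => Real.exp_pos _) Finset.univ_nonempty
  have hσ_pos : ∀ y, 0 < σ y := by
    intro y; rw [hσ y]; exact div_pos (Real.exp_pos _) hZpos
  have hσ_sum : ∑ y, σ y = 1 := by
    have : ∑ y, σ y = (∑ y, Real.exp (E y / (a + b))) / Z := by
      rw [Finset.sum_div]
      exact Finset.sum_congr rfl fun y _ => hσ y
    rw [this, ← hZ, div_self hZpos.ne']
  -- log of σ
  have hlogσ : ∀ y, Real.log (σ y) = E y / (a + b) - Real.log Z := by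
    intro y
    rw [hσ y, Real.log_div (Real.exp_ne_zero _) hZpos.ne', Real.log_exp]
  -- key functional identity
  have key : ∀ ρ : Y → ℝ, (∀ y, 0 ≤ ρ y) → ∑ y, ρ y = 1 →
      (∑ y, ρ y * u y) - a * KL ρ p - b * KL ρ q =
        (a + b) * Real.log Z - (a + b) * KL ρ σ := by
    intro ρ hρ hρs
    have term : ∀ y, ρ y * u y - a * (ρ y * Real.log (ρ y / p y))
        - b * (ρ y * Real.log (ρ y / q y)) =
        (a + b) * (ρ y * Real.log Z) - (a + b) * (ρ y * Real.log (ρ y / σ y)) := by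
      intro y
      rcases eq_or_lt_of_le (hρ y) with h0 | h0
      · simp [← h0]
      · rw [Real.log_div h0.ne' (hp_pos y).ne',
            Real.log_div h0.ne' (hq_pos y).ne',
            Real.log_div h0.ne' (hσ_pos y).ne', hlogσ y, hE]
        field_simp
        ring
    have lhs : (∑ y, ρ y * u y) - a * KL ρ p - b * KL ρ q =
        ∑ y, (ρ y * u y - a * (ρ y * Real.log (ρ y / p y))
          - b * (ρ y * Real.log (ρ y / q y))) := by
      unfold KL
      rw [Finset.mul_sum, Finset.mul_sum, ← Finset.sum_sub_distrib,
        ← Finset.sum_sub_distrib]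
    have h1 : (a + b) * Real.log Z = ∑ y, (a + b) * (ρ y * Real.log Z) := by
      rw [← Finset.mul_sum, ← Finset.sum_mul, hρs, one_mul]
    have rhs : (a + b) * Real.log Z - (a + b) * KL ρ σ =
        ∑ y, ((a + b) * (ρ y * Real.log Z) - (a + b) * (ρ y * Real.log (ρ y / σ y))) := by
      unfold KL
      rw [h1, Finset.mul_sum, ← Finset.sum_sub_distrib]
    rw [lhs, rhs]
    exact Finset.sum_congr rfl fun y _ => term y
  refine ⟨⟨hσ_pos, hσ_sum⟩, ?_⟩
  intro ρ hρ0 hρ1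
  have hρid := key ρ hρ0 hρ1
  have hσid := key σ (fun y => (hσ_pos y).le) hσ_sum
  have hKσ : KL σ σ = 0 :=
    (KL_nonneg' σ σ (fun y => (hσ_pos y).le) hσ_sum hσ_pos hσ_sum).2.mpr rfl
  have hK := KL_nonneg' ρ σ hρ0 hρ1 hσ_pos hσ_sum
  constructor
  · rw [hρid, hσid, hKσ]
    nlinarith [hK.1, hab]
  · rw [hρid, hσid, hKσ]
    constructor
    · intro h
      have h' : (a + b) * KL ρ σ = 0 := by linarith
      exact hK.2.mp ((mul_eq_zero.mp h').resolve_left hab.ne')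
    · intro h; rw [h, hKσ]
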